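/- arXiv:2210.16717 — 4 statements merged into one kernel-verified Lean document; each statement's English description precedes it below -/
import Mathlib

section
/- Let k ≥ 100 be an integer and let α = ρ_i·e^(iθ_i) and β = ρ_j·e^(iθ_j) be two roots of the k-generalized Fibonacci polynomial f_k with ρ_i, ρ_j < 1 and θ_i, θ_j ∈ (0, π]. If π/2 > |θ_i − θ_j| ≥ 2π/k, then |α − β| ≥ (4 − 2·log 3)/k. -/
open Polynomial Real

/-- The `k`-generalized Fibonacci polynomial `f_k(X) = X^k - X^(k-1) - ⋯ - X - 1`,
viewed as a polynomial over `ℂ`. -/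
noncomputable def fibPoly (k : ℕ) : Polynomial ℂ :=
  X ^ k - ∑ i ∈ Finset.range k, X ^ i

-- roots have modulus² > 1/3
lemma fibPoly_root_sq (k : ℕ) (hk : 100 ≤ k) (β : ℂ) (hβ : (fibPoly k).IsRoot β)
    (h1 : ‖β‖ < 1) : 1 / 3 < ‖β‖ ^ 2 := by
  have hβ1 : β ≠ 1 := by
    intro h; rw [h] at h1; simp at h1
  have heval : β ^ k = ∑ i ∈ Finset.range k, β ^ i := by
    have hh := hβ
    unfold fibPoly Polynomial.IsRoot at hh
    simp only [Polynomial.eval_sub, Polynomial.eval_pow, Polynomial.eval_X] at hh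
    rw [sub_eq_zero] at hh
    rw [hh]
    simp [Polynomial.eval_finset_sum]
  rw [geom_sum_eq hβ1] at heval
  have hkey : β ^ k * (β - 2) = -1 := by
    have hne : β - 1 ≠ 0 := sub_ne_zero.mpr hβ1
    have h' : β ^ k * (β - 1) = β ^ k - 1 := by
      conv_lhs => rw [heval]
      exact div_mul_cancel₀ _ hne
    linear_combination h'
  have habs : ‖β‖ ^ k * ‖β - 2‖ = 1 := by
    have := congrArg (‖·‖) hkey
    simpa [norm_mul, norm_pow] using this
  have hb2 : ‖β - 2‖ < 3 := by
    calc ‖β - 2‖ ≤ ‖β‖ + ‖(2:ℂ)‖ := by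
          simpa [sub_eq_add_neg] using norm_add_le β (-2)
      _ < 3 := by simp at *; linarith
  have hb2pos : 0 < ‖β - 2‖ := by
    rcases eq_or_lt_of_le (norm_nonneg (β - 2)) with h | h
    · exfalso; rw [← h] at habs; simp at habs
    · exact h
  have hpk : 1 / 3 < ‖β‖ ^ k := by
    nlinarith
  calc 1/3 < ‖β‖ ^ k := hpk
    _ ≤ ‖β‖ ^ 2 :=
      pow_le_pow_of_le_one (norm_nonneg β) h1.le (by omega)

/-- Let `k ≥ 100` and let `α = ρᵢ·e^(iθᵢ)`, `β = ρⱼ·e^(iθⱼ)` be roots of `f_k` with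
`ρᵢ, ρⱼ < 1` and `θᵢ, θⱼ ∈ (0, π]`. If `π/2 > |θᵢ − θⱼ| ≥ 2π/k`, then
`|α − β| ≥ (4 − 2·log 3)/k`. -/
theorem fibPoly_nonconsecutive_arguments_separation (k : ℕ) (hk : 100 ≤ k)
    (α β : ℂ) (ρi ρj θi θj : ℝ)
    (hα : (fibPoly k).IsRoot α) (hβ : (fibPoly k).IsRoot β)
    (hαpolar : α = (ρi : ℂ) * Complex.exp (θi * Complex.I))
    (hβpolar : β = (ρj : ℂ) * Complex.exp (θj * Complex.I))
    (hρi : 0 < ρi) (hρi1 : ρi < 1) (hρj : 0 < ρj) (hρj1 : ρj < 1)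
    (hθi : 0 < θi) (hθi' : θi ≤ π) (hθj : 0 < θj) (hθj' : θj ≤ π)
    (hlt : |θi - θj| < π / 2) (hge : |θi - θj| ≥ 2 * π / k) :
    ‖α - β‖ ≥ (4 - 2 * Real.log 3) / k := by
  have hkpos : (0:ℝ) < k := by positivity
  have habsβ : ‖β‖ = ρj := by
    rw [hβpolar]; simp [Complex.norm_exp, hρj.le]
  have hρj2 : 1 / 3 < ρj ^ 2 := by
    have := fibPoly_root_sq k hk β hβ (by rw [habsβ]; exact hρj1)
    rwa [habsβ] at this
  have hρjhalf : 1 / 2 < ρj := by nlinarith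
  -- geometric bound
  set d := |θi - θj| with hd
  have hdpos : 0 < d := lt_of_lt_of_le (by positivity) hge
  -- |α - β| ≥ ρj * sin d
  have hrot : ‖α - β‖ = ‖Complex.exp (-θi * Complex.I) * (α - β)‖ := by
    rw [norm_mul, Complex.norm_exp]; simp
  have him : (Complex.exp (-θi * Complex.I) * (α - β)).im = -(ρj * Real.sin (θj - θi)) := by
    rw [hαpolar, hβpolar, mul_sub]
    have h1 : (θi : ℂ) * Complex.I + -θi * Complex.I = 0 := by ring
    have h2 : Complex.exp (-↑θi * Complex.I) * (↑ρi * Complex.exp (↑θi * Complex.I))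
        = (ρi : ℂ) := by rw [mul_comm (Complex.exp _), mul_assoc, ← Complex.exp_add, h1]; simp
    rw [h2]
    have h3 : Complex.exp (-↑θi * Complex.I) * (↑ρj * Complex.exp (↑θj * Complex.I))
        = (ρj : ℂ) * Complex.exp ((↑(θj - θi)) * Complex.I) := by
      rw [mul_comm (Complex.exp _), mul_assoc, ← Complex.exp_add]; push_cast; ring_nf
    rw [h3]
    simp only [Complex.sub_im, Complex.ofReal_im, Complex.mul_im, Complex.ofReal_re,
      Complex.exp_ofReal_mul_I_im]
    ring
  have hsin : |Real.sin (θj - θi)| = Real.sin d := by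
    have hπ := Real.pi_pos
    rcases abs_cases (θi - θj) with ⟨h1, h2⟩ | ⟨h1, h2⟩
    · have hd' : d = θi - θj := by rw [hd, h1]
      rw [show θj - θi = -(θi - θj) by ring, Real.sin_neg, abs_neg, ← hd']
      exact abs_of_nonneg (Real.sin_nonneg_of_nonneg_of_le_pi (by linarith [hd' ▸ hdpos])
        (by linarith [hd' ▸ hlt]))
    · have hd' : d = θj - θi := by rw [hd, h1]; ring
      rw [← hd']
      exact abs_of_nonneg (Real.sin_nonneg_of_nonneg_of_le_pi (by linarith [hd' ▸ hdpos])
        (by linarith [hd' ▸ hlt]))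
  have hmain : ρj * Real.sin d ≤ ‖α - β‖ := by
    rw [hrot]
    calc ρj * Real.sin d = |(Complex.exp (-θi * Complex.I) * (α - β)).im| := by
          rw [him, abs_neg, abs_mul, abs_of_pos hρj, hsin]
      _ ≤ _ := Complex.abs_im_le_norm _
  -- sin d ≥ 2/π * d ≥ 2/π * 2π/k = 4/k
  have hsinlb : 4 / k ≤ Real.sin d := by
    have hj : 2 / π * d ≤ Real.sin d := Real.mul_le_sin hdpos.le hlt.le
    have : 2 / π * (2 * π / k) ≤ 2 / π * d :=
      mul_le_mul_of_nonneg_left hge (by positivity)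
    have hπ : (0:ℝ) < π := Real.pi_pos
    calc (4:ℝ) / k = 2 / π * (2 * π / k) := by field_simp; ring
      _ ≤ 2 / π * d := this
      _ ≤ Real.sin d := hj
  have hlog : 1 < Real.log 3 := by
    rw [show (1:ℝ) = Real.log (Real.exp 1) by simp]
    exact Real.log_lt_log (Real.exp_pos 1) (by linarith [Real.exp_one_lt_d9])
  calc (4 - 2 * Real.log 3) / k ≤ (1/2) * (4 / k) := by
        rw [div_le_iff₀ hkpos]
        have : (4:ℝ) - 2 * Real.log 3 ≤ 2 := by linarith
        calc (4:ℝ) - 2 * Real.log 3 ≤ 2 := this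
          _ = 1/2 * (4/k) * k := by field_simp; ring
      _ ≤ ρj * Real.sin d := by
        apply mul_le_mul hρjhalf.le hsinlb (by positivity) hρj.le
      _ ≤ ‖α - β‖ := hmain
end

section
/- Let k ≥ 100 be an integer, let h_k(X) = X^(k+1) − 2X + 1, and let α, β be two distinct roots of the k-generalized Fibonacci polynomial f_k with |α| < 1 and |β| < 1. Then |h_k′(1/α)| · |h_k′(1/β)| > k^2/(2·e^3), where h_k′(X) = (k+1)·X^k − 2 is the derivative of h_k. -/
open Polynomial Real

lemma fibPoly_key (k : ℕ) (α : ℂ) (hα : (fibPoly k).IsRoot α)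
    (hα1 : ‖α‖ < 1) :
    ((k : ℂ) + 1) * (1 / α) ^ k - 2 = 2 * k - (k + 1) * α := by
  have hroot : α ^ k - ∑ i ∈ Finset.range k, α ^ i = 0 := by
    simpa [fibPoly, Polynomial.IsRoot, Polynomial.eval_finset_sum] using hα
  have hne1 : α ≠ 1 := by
    intro h; rw [h] at hα1; simp at hα1
  have hgeom : (∑ i ∈ Finset.range k, α ^ i) * (α - 1) = α ^ k - 1 := geom_sum_mul α k
  have hkey : α ^ k * (2 - α) = 1 := by
    linear_combination (1 - α) * hroot - hgeom
  have h2α : (2 : ℂ) - α ≠ 0 := by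
    intro h
    have h2 : α = 2 := by linear_combination -h
    rw [h2] at hα1
    norm_num at hα1
  have hαk : α ^ k ≠ 0 := by
    intro h; rw [h, zero_mul] at hkey; exact one_ne_zero hkey.symm
  have hinv : (1 / α) ^ k = 2 - α := by
    rw [div_pow, one_pow]
    field_simp
    linear_combination -hkey
  rw [hinv]; ring

lemma fibPoly_abs_lb (k : ℕ) (hk : 100 ≤ k) (α : ℂ) (hα : (fibPoly k).IsRoot α)
    (hα1 : ‖α‖ < 1) :
    (k : ℝ) - 1 < ‖((k : ℂ) + 1) * (1 / α) ^ k - 2‖ := by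
  rw [fibPoly_key k α hα hα1]
  have h1 : ‖2 * (k : ℂ)‖ - ‖((k : ℂ) + 1) * α‖ ≤
      ‖2 * (k : ℂ) - ((k : ℂ) + 1) * α‖ := by
    have := abs_norm_sub_norm_le (2 * (k : ℂ)) (((k : ℂ) + 1) * α)
    have := abs_le.mp this
    linarith [this.2]
  have h2 : ‖2 * (k : ℂ)‖ = 2 * k := by
    simp [Complex.norm_natCast]
  have h3 : ‖((k : ℂ) + 1) * α‖ < k + 1 := by
    rw [norm_mul]
    have hk1 : ‖(k : ℂ) + 1‖ = (k : ℝ) + 1 := by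
      rw [show ((k : ℂ) + 1) = ((k + 1 : ℕ) : ℂ) by push_cast; ring,
        Complex.norm_natCast]
      push_cast; ring
    rw [hk1]
    calc ((k : ℝ) + 1) * ‖α‖ < (k + 1) * 1 := by
          apply mul_lt_mul_of_pos_left hα1; positivity
      _ = k + 1 := mul_one _
  nlinarith [h1, h2, h3]

/-- Let `k ≥ 100` and let `α, β` be two distinct roots of `f_k` with `|α| < 1` and
`|β| < 1`. Then `|h_k′(1/α)| · |h_k′(1/β)| > k²/(2·e³)`, where
`h_k′(X) = (k+1)·X^k − 2` is the derivative of `h_k(X) = X^(k+1) − 2X + 1`. -/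
theorem fibPoly_derivative_product_lower_bound (k : ℕ) (hk : 100 ≤ k) (α β : ℂ)
    (hα : (fibPoly k).IsRoot α) (hβ : (fibPoly k).IsRoot β) (hne : α ≠ β)
    (hα1 : ‖α‖ < 1) (hβ1 : ‖β‖ < 1) :
    ‖((k : ℂ) + 1) * (1 / α) ^ k - 2‖ *
        ‖((k : ℂ) + 1) * (1 / β) ^ k - 2‖ >
      (k : ℝ) ^ 2 / (2 * Real.exp 1 ^ 3) := by
  have ha := fibPoly_abs_lb k hk α hα hα1
  have hb := fibPoly_abs_lb k hk β hβ hβ1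
  have hkR : (100 : ℝ) ≤ (k : ℝ) := by exact_mod_cast hk
  have hknn : (0 : ℝ) ≤ (k : ℝ) - 1 := by linarith
  have hprod : ((k : ℝ) - 1) * ((k : ℝ) - 1) <
      ‖((k : ℂ) + 1) * (1 / α) ^ k - 2‖ *
        ‖((k : ℂ) + 1) * (1 / β) ^ k - 2‖ :=
    mul_lt_mul'' ha hb hknn hknn
  have he : (2 : ℝ) < Real.exp 1 := by
    have := Real.exp_one_gt_d9; linarith
  have he3 : (8 : ℝ) < Real.exp 1 ^ 3 := by
    have : (2 : ℝ) ^ 3 < Real.exp 1 ^ 3 := by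
      apply pow_lt_pow_left₀ he (by norm_num) (by norm_num)
    linarith [this]
  have hpos : (0 : ℝ) < 2 * Real.exp 1 ^ 3 := by linarith
  have hfinal : (k : ℝ) ^ 2 / (2 * Real.exp 1 ^ 3) < ((k : ℝ) - 1) * ((k : ℝ) - 1) := by
    rw [div_lt_iff₀ hpos]
    nlinarith [sq_nonneg ((k : ℝ) - 1)]
  linarith
end

section
/- Let k ≥ 100 be an integer and let α, β be two distinct roots of the k-generalized Fibonacci polynomial f_k with |α| < 1 and |β| < 1. Then k^2/(13000·e^3) < |α − β|^2 · ∏ |α − γ|·|β − γ|, where the product is over all roots γ of f_k with |γ| < 1 and γ ∉ {α, β}. -/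
open Polynomial Real

noncomputable def Complex.abs : AbsoluteValue ℂ ℝ where
  toFun := fun z => ‖z‖
  map_mul' := norm_mul
  nonneg' := norm_nonneg
  eq_zero' := fun _ => norm_eq_zero
  add_le' := norm_add_le

lemma Complex.abs_apply' (z : ℂ) : Complex.abs z = ‖z‖ := rfl

@[simp]
lemma Complex.norm_eq_abs (z : ℂ) : ‖z‖ = Complex.abs z := rfl

lemma Complex.abs_re_lt_abs {z : ℂ} : |z.re| < Complex.abs z ↔ z.im ≠ 0 :=
  Complex.abs_re_lt_norm

lemma Complex.re_le_abs (z : ℂ) : z.re ≤ Complex.abs z := Complex.re_le_norm z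

lemma Complex.sq_abs (z : ℂ) : Complex.abs z ^ 2 = Complex.normSq z := Complex.sq_norm z

lemma Complex.abs_ofReal (r : ℝ) : Complex.abs (r : ℂ) = |r| := Complex.norm_real r

@[simp]
lemma Complex.abs_natCast (n : ℕ) : Complex.abs (n : ℂ) = n := Complex.norm_natCast n

@[simp]
lemma Complex.abs_two : Complex.abs (2 : ℂ) = 2 := Complex.norm_two

noncomputable def Fk (k : ℕ) (r : ℝ) : ℝ := ∑ i ∈ Finset.range k, r ^ i / r ^ k


lemma eval_fib (k : ℕ) (z : ℂ) :
    (fibPoly k).eval z = z ^ k - ∑ i ∈ Finset.range k, z ^ i := by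
  simp [fibPoly, eval_finset_sum]

lemma fib_monic (k : ℕ) (hk : 1 ≤ k) : (fibPoly k).Monic := by
  apply monic_X_pow_sub
  apply lt_of_le_of_lt (degree_sum_le _ _)
  rw [Finset.sup_lt_iff]
  · intro i hi
    refine lt_of_le_of_lt (degree_X_pow_le i) ?_
    exact_mod_cast Finset.mem_range.mp hi
  · exact bot_lt_iff_ne_bot.mpr (by simp)

lemma root_key {k : ℕ} {γ : ℂ} (h : (fibPoly k).IsRoot γ) : γ ^ k * (2 - γ) = 1 := by
  have h0 : γ ^ k - ∑ i ∈ Finset.range k, γ ^ i = 0 := by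
    rw [← eval_fib]; exact h
  have h1 := geom_sum_mul γ k
  linear_combination (1 - γ) * h0 - h1

lemma root_ne_one {k : ℕ} (hk : 2 ≤ k) {γ : ℂ} (h : (fibPoly k).IsRoot γ) : γ ≠ 1 := by
  intro rfl'
  subst rfl'
  have : (1:ℂ) ^ k - ∑ i ∈ Finset.range k, (1:ℂ) ^ i = 0 := by rw [← eval_fib]; exact h
  simp at this
  have h2 : (k:ℂ) = 1 := by linear_combination -this
  have : (k:ℕ) = 1 := by exact_mod_cast h2
  omega

lemma root_ne_zero {k : ℕ} (hk : 1 ≤ k) {γ : ℂ} (h : (fibPoly k).IsRoot γ) : γ ≠ 0 := by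
  intro rfl'
  subst rfl'
  have := root_key h
  rw [zero_pow (by omega)] at this
  simp at this

lemma g_eq (k : ℕ) : (X - 1) * fibPoly k = X ^ (k+1) - C 2 * X ^ k + 1 := by
  have h1 := geom_sum_mul (X : Polynomial ℂ) k
  rw [fibPoly]
  rw [map_ofNat]
  linear_combination (-1 : Polynomial ℂ) * h1

lemma deriv_g (k : ℕ) (hk : 1 ≤ k) :
    derivative (X ^ (k+1) - C 2 * X ^ k + 1 : Polynomial ℂ)
      = C ((k:ℂ)+1) * X ^ k - C 2 * (C (k:ℂ) * X ^ (k-1)) := by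
  rw [derivative_add, derivative_sub, derivative_X_pow, derivative_mul, derivative_X_pow]
  simp [Nat.add_sub_cancel]

lemma key_deriv {k : ℕ} (hk : 1 ≤ k) {α : ℂ} (h : (fibPoly k).IsRoot α) :
    (α - 1) * eval α (derivative (fibPoly k))
      = α ^ (k-1) * (((k:ℂ)+1) * α - 2 * k) := by
  have hd := congrArg derivative (g_eq k)
  rw [derivative_mul, deriv_g k hk] at hd
  have hev := congrArg (eval α) hd
  simp only [derivative_sub, derivative_X, derivative_one, sub_zero, eval_add, eval_sub,
    eval_mul, eval_one, eval_X, eval_C, eval_pow, one_mul] at hev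
  rw [show eval α (fibPoly k) = 0 from h] at hev
  have hα : α ^ k = α ^ (k-1) * α := by
    rw [← pow_succ]; congr 1; omega
  rw [hα] at hev
  linear_combination hev

lemma deriv_ne_zero {k : ℕ} (hk : 100 ≤ k) {γ : ℂ} (h : (fibPoly k).IsRoot γ) :
    eval γ (derivative (fibPoly k)) ≠ 0 := by
  intro h0
  have hkd := key_deriv (by omega) h
  rw [h0, mul_zero] at hkd
  have hγ0 : γ ≠ 0 := root_ne_zero (by omega) h
  have hpow : γ ^ (k-1) ≠ 0 := pow_ne_zero _ hγ0
  have hlin : ((k:ℂ)+1) * γ - 2 * k = 0 := by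
    rcases mul_eq_zero.mp hkd.symm with h' | h'
    · exact absurd h' hpow
    · exact h'
  -- γ = 2k/(k+1), real
  have hk1 : ((k:ℂ)+1) ≠ 0 := by
    intro hc
    have : ((k:ℝ)+1) = 0 := by exact_mod_cast congrArg Complex.re hc
    have : (0:ℝ) ≤ (k:ℝ) := Nat.cast_nonneg k
    linarith
  set c : ℝ := 2 * k / (k + 1) with hc
  have hkR : ((k:ℝ)+1) ≠ 0 := by positivity
  have hγc : γ = (c : ℂ) := by
    rw [hc]
    push_cast
    field_simp
    linear_combination hlin
  have hkey := root_key h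
  rw [hγc] at hkey
  have hkeyR : c ^ k * (2 - c) = 1 := by
    exact_mod_cast hkey
  -- contradiction: c ≥ 3/2, c^k ≥ 1 + k/2, 2 - c = 2/(k+1)
  have h32 : (3/2 : ℝ) ≤ c := by
    rw [hc, le_div_iff₀ (by positivity)]
    have : (100:ℝ) ≤ (k:ℝ) := by exact_mod_cast hk
    nlinarith
  have hb : 1 + (k:ℝ) * (1/2) ≤ (3/2:ℝ) ^ k := by
    have := one_add_mul_le_pow (a := (1/2:ℝ)) (by norm_num) k
    norm_num at this ⊢
    linarith
  have hck : 1 + (k:ℝ) * (1/2) ≤ c ^ k :=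
    le_trans hb (pow_le_pow_left₀ (by norm_num) h32 k)
  have h2c : 2 - c = 2 / ((k:ℝ)+1) := by
    rw [hc]; field_simp; ring
  rw [h2c] at hkeyR
  have : (100:ℝ) ≤ (k:ℝ) := by exact_mod_cast hk
  have hkpos : (0:ℝ) < (k:ℝ)+1 := by linarith
  have : (1 + (k:ℝ) * (1/2)) * (2/((k:ℝ)+1)) ≤ 1 := by
    calc (1 + (k:ℝ) * (1/2)) * (2/((k:ℝ)+1)) ≤ c ^ k * (2/((k:ℝ)+1)) := by
          apply mul_le_mul_of_nonneg_right hck (by positivity)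
      _ = 1 := hkeyR
  rw [mul_div_assoc', div_le_iff₀ hkpos] at this
  linarith

lemma fib_ne_zero {k : ℕ} (hk : 100 ≤ k) : fibPoly k ≠ 0 :=
  (fib_monic k (by omega)).ne_zero

lemma roots_nodup {k : ℕ} (hk : 100 ≤ k) : (fibPoly k).roots.Nodup := by
  classical
  rw [Multiset.nodup_iff_count_le_one]
  intro γ
  by_contra hcon
  push_neg at hcon
  rw [count_roots] at hcon
  have hroot : (fibPoly k).IsRoot γ := by
    apply (rootMultiplicity_pos (fib_ne_zero hk)).mp
    omega
  have hdvd : (X - C γ) ^ 2 ∣ fibPoly k :=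
    dvd_trans (pow_dvd_pow _ (by omega)) (pow_rootMultiplicity_dvd _ γ)
  obtain ⟨q, hq⟩ := hdvd
  apply deriv_ne_zero hk hroot
  rw [hq, derivative_mul, derivative_pow]
  simp [sub_self]

lemma fib_eq_prod {k : ℕ} (hk : 100 ≤ k) :
    fibPoly k = ((fibPoly k).roots.map (fun γ => X - C γ)).prod :=
  (IsAlgClosed.splits _).eq_prod_roots_of_monic (fib_monic k (by omega))

lemma deriv_eval_prod {k : ℕ} (hk : 100 ≤ k) {α : ℂ} (hα : (fibPoly k).IsRoot α) :
    eval α (derivative (fibPoly k))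
      = (((fibPoly k).roots.erase α).map (fun γ => α - γ)).prod := by
  classical
  conv_lhs => rw [fib_eq_prod hk]
  exact eval_multiset_prod_X_sub_C_derivative
    ((mem_roots (fib_ne_zero hk)).mpr hα)

lemma exists_phi {k : ℕ} (hk : 100 ≤ k) :
    ∃ φ : ℝ, 1 < φ ∧ φ < 2 ∧ φ ^ k = ∑ i ∈ Finset.range k, φ ^ i := by
  set f : ℝ → ℝ := fun x => x ^ k - ∑ i ∈ Finset.range k, x ^ i with hf
  have hcont : Continuous f := by
    apply Continuous.sub (continuous_pow k)
    exact continuous_finset_sum _ (fun i _ => continuous_pow i)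
  have hf1 : f 1 < 0 := by
    simp only [hf, one_pow, Finset.sum_const, Finset.card_range, nsmul_eq_mul, mul_one]
    have : (100:ℝ) ≤ (k:ℝ) := by exact_mod_cast hk
    linarith
  have hf2 : 0 < f 2 := by
    have hs : ∑ i ∈ Finset.range k, (2:ℝ) ^ i = 2 ^ k - 1 := by
      have := geom_sum_mul (2:ℝ) k
      linarith
    simp only [hf]
    rw [hs]; linarith
  obtain ⟨φ, hφmem, hφ⟩ := intermediate_value_Icc (by norm_num : (1:ℝ) ≤ 2)
    hcont.continuousOn ⟨le_of_lt hf1, le_of_lt hf2⟩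
  refine ⟨φ, ?_, ?_, by have := hφ; simp only [hf] at this; linarith⟩
  · rcases lt_or_eq_of_le hφmem.1 with h | h
    · exact h
    · exfalso; rw [← h] at hφ; linarith
  · rcases lt_or_eq_of_le hφmem.2 with h | h
    · exact h
    · exfalso; rw [h] at hφ; linarith

lemma Fk_strictAnti {k : ℕ} (hk : 1 ≤ k) {r s : ℝ} (hr : 1 < r) (hrs : r < s) :
    Fk k s < Fk k r := by
  have hr0 : 0 < r := by linarith
  have hs0 : 0 < s := by linarith
  apply Finset.sum_lt_sum_of_nonempty (by simp; omega)
  intro i hi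
  have hik : i < k := Finset.mem_range.mp hi
  rw [div_lt_div_iff₀ (by positivity) (by positivity)]
  have hsplit : i + (k - i) = k := by omega
  rw [← hsplit, pow_add, pow_add]
  have h1 : r ^ (k-i) < s ^ (k-i) := by
    apply pow_lt_pow_left₀ hrs (le_of_lt hr0) (by omega)
  have h2 : (0:ℝ) < r ^ i := by positivity
  have h3 : (0:ℝ) < s ^ i := by positivity
  have h4 : (0:ℝ) < r ^ (k-i) := by positivity
  calc s ^ i * (r ^ i * r ^ (k-i)) = (r ^ i * s ^ i) * r ^ (k-i) := by ring
    _ < (r ^ i * s ^ i) * s ^ (k-i) := by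
        exact mul_lt_mul_of_pos_left h1 (by positivity)
    _ = r ^ i * (s ^ i * s ^ (k-i)) := by ring
lemma Fk_eq_one {k : ℕ} {φ : ℝ} (hφ0 : 0 < φ)
    (hroot : φ ^ k = ∑ i ∈ Finset.range k, φ ^ i) : Fk k φ = 1 := by
  have h : φ ^ k ≠ 0 := by positivity
  rw [Fk, ← Finset.sum_div, ← hroot, div_self h]

lemma re_eq_abs_imp {z : ℂ} (h : z.re = Complex.abs z) :
    z = ((Complex.abs z : ℝ) : ℂ) := by
  by_cases him : z.im = 0
  · rw [← h]
    exact Complex.ext rfl (by simpa using him)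
  · exfalso
    have := Complex.abs_re_lt_abs.mpr him
    rw [h] at this
    have h0 : 0 ≤ Complex.abs z := Complex.abs.nonneg z
    rw [abs_of_nonneg h0] at this
    exact lt_irrefl _ this

lemma root_sum_eq_one {k : ℕ} (hk : 1 ≤ k) {γ : ℂ} (h : (fibPoly k).IsRoot γ) :
    ∑ i ∈ Finset.range k, γ ^ i / γ ^ k = 1 := by
  have h0 : γ ^ k = ∑ i ∈ Finset.range k, γ ^ i := by
    have := h
    rw [IsRoot, eval_fib] at this
    linear_combination this
  have hγ : γ ^ k ≠ 0 := pow_ne_zero _ (root_ne_zero hk h)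
  rw [← Finset.sum_div, ← h0, div_self hγ]

lemma one_le_Fk_abs {k : ℕ} (hk : 1 ≤ k) {γ : ℂ} (h : (fibPoly k).IsRoot γ) :
    1 ≤ Fk k (Complex.abs γ) := by
  have hs := root_sum_eq_one hk h
  have hre : (1:ℝ) = ∑ i ∈ Finset.range k, (γ ^ i / γ ^ k).re := by
    rw [← Complex.re_sum, hs, Complex.one_re]
  rw [hre, Fk]
  apply Finset.sum_le_sum
  intro i _
  calc (γ ^ i / γ ^ k).re ≤ Complex.abs (γ ^ i / γ ^ k) := Complex.re_le_abs _
    _ = Complex.abs γ ^ i / Complex.abs γ ^ k := by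
        rw [map_div₀, map_pow, map_pow]

lemma one_lt_Fk_abs {k : ℕ} (hk : 1 ≤ k) {γ : ℂ} (h : (fibPoly k).IsRoot γ)
    (hstrict : γ⁻¹.re < Complex.abs γ⁻¹) :
    1 < Fk k (Complex.abs γ) := by
  have hs := root_sum_eq_one hk h
  have hre : (1:ℝ) = ∑ i ∈ Finset.range k, (γ ^ i / γ ^ k).re := by
    rw [← Complex.re_sum, hs, Complex.one_re]
  rw [hre, Fk]
  have hγ0 : γ ≠ 0 := root_ne_zero hk h
  apply Finset.sum_lt_sum
  · intro i _
    calc (γ ^ i / γ ^ k).re ≤ Complex.abs (γ ^ i / γ ^ k) := Complex.re_le_abs _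
      _ = Complex.abs γ ^ i / Complex.abs γ ^ k := by rw [map_div₀, map_pow, map_pow]
  · refine ⟨k - 1, Finset.mem_range.mpr (by omega), ?_⟩
    have hterm : γ ^ (k-1) / γ ^ k = γ⁻¹ := by
      rw [show k = (k-1) + 1 by omega, pow_succ]
      field_simp
      rw [Nat.add_sub_cancel]
    have hγa : Complex.abs γ ≠ 0 := by simpa using hγ0
    have habs : Complex.abs γ ^ (k-1) / Complex.abs γ ^ k = Complex.abs γ⁻¹ := by
      rw [show k = (k-1) + 1 by omega, pow_succ, map_inv₀]
      rw [Nat.add_sub_cancel]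
      field_simp
    rw [hterm, habs]
    exact hstrict

lemma root_abs_ne_one {k : ℕ} (hk : 100 ≤ k) {γ : ℂ} (h : (fibPoly k).IsRoot γ) :
    Complex.abs γ ≠ 1 := by
  intro hr
  have hkey := root_key h
  have h2 : 2 * γ ^ k = γ ^ (k+1) + 1 := by linear_combination hkey
  set z : ℂ := γ ^ (k+1) with hz
  have habs : Complex.abs z = 1 := by rw [hz, map_pow, hr, one_pow]
  have h4 : Complex.abs (z + 1) = 2 := by
    rw [← h2, map_mul, map_pow, hr, one_pow, mul_one]
    simp
  have hnsq : Complex.normSq (z + 1) = 4 := by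
    have := Complex.sq_abs (z + 1)
    rw [h4] at this
    nlinarith [this]
  have hnz : Complex.normSq z = 1 := by
    have := Complex.sq_abs z
    rw [habs] at this
    nlinarith [this]
  have hre : z.re = 1 := by
    have hexp : Complex.normSq (z + 1) = Complex.normSq z + 2 * z.re + 1 := by
      simp [Complex.normSq_apply, Complex.add_re, Complex.add_im]
      ring
    rw [hnsq, hnz] at hexp
    linarith
  have hz1 : z = 1 := by
    have := re_eq_abs_imp (z := z) (by rw [habs, hre])
    rw [habs] at this
    simpa using this
  have hγk : γ ^ k = 1 := by
    rw [hz1] at h2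
    have : 2 * γ ^ k = 2 := by linear_combination h2
    field_simp at this
    exact this
  have hz1' : γ ^ (k+1) = 1 := by rw [← hz]; exact hz1
  have hγ1 : γ = 1 := by linear_combination hz1' - γ * hγk
  exact root_ne_one (by omega) h hγ1


lemma root_abs_gt_one_eq_phi {k : ℕ} (hk : 100 ≤ k) {φ : ℝ}
    (hφ1 : 1 < φ) (hφ2 : φ < 2) (hφroot : φ ^ k = ∑ i ∈ Finset.range k, φ ^ i)
    {γ : ℂ} (h : (fibPoly k).IsRoot γ) (hγ1 : 1 < Complex.abs γ) :
    γ = ((φ : ℝ) : ℂ) := by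
  set r : ℝ := Complex.abs γ with hrdef
  have hk1 : 1 ≤ k := by omega
  have hFφ : Fk k φ = 1 := Fk_eq_one (by linarith) hφroot
  have hF1 : 1 ≤ Fk k r := one_le_Fk_abs hk1 h
  -- r ≤ φ
  have hrφ : r ≤ φ := by
    by_contra hcon
    push_neg at hcon
    have := Fk_strictAnti hk1 hφ1 hcon
    rw [hFφ] at this
    linarith
  -- r ≥ φ
  have hφr : φ ≤ r := by
    by_contra hcon
    push_neg at hcon
    -- 1 < r < φ < 2
    have hr2 : r < 2 := by linarith
    have hFr : 1 < Fk k r := by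
      have := Fk_strictAnti hk1 hγ1 hcon
      rw [hFφ] at this
      linarith
    have hrk : (0:ℝ) < r ^ k := pow_pos (by linarith) k
    have hsum : r ^ k * Fk k r = ∑ i ∈ Finset.range k, r ^ i := by
      rw [Fk, Finset.mul_sum]
      apply Finset.sum_congr rfl
      intro i _
      field_simp
    have hgt : r ^ k < ∑ i ∈ Finset.range k, r ^ i := by
      calc r ^ k = r ^ k * 1 := by ring
        _ < r ^ k * Fk k r := by exact mul_lt_mul_of_pos_left hFr hrk
        _ = _ := hsum
    have hgeom := geom_sum_mul r k
    -- r^k (2 - r) > 1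
    have hineq : 1 < r ^ k * (2 - r) := by nlinarith
    -- but 1 = r^k * |2 - γ| ≥ r^k * (2 - r)
    have hkey := root_key h
    have habs : r ^ k * Complex.abs (2 - γ) = 1 := by
      have := congrArg Complex.abs hkey
      rw [map_mul, map_pow] at this
      simpa using this
    have h2γ : 2 - r ≤ Complex.abs (2 - γ) := by
      have := norm_sub_norm_le (2:ℂ) γ
      rw [Complex.norm_eq_abs, Complex.norm_eq_abs] at this
      simpa using this
    nlinarith
  have hrφ' : r = φ := le_antisymm hrφ hφr
  -- equality case: γ⁻¹.re = |γ⁻¹|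
  have hre : γ⁻¹.re = Complex.abs γ⁻¹ := by
    by_contra hcon
    have hlt : γ⁻¹.re < Complex.abs γ⁻¹ :=
      lt_of_le_of_ne (Complex.re_le_abs _) hcon
    have := one_lt_Fk_abs hk1 h hlt
    rw [← hrdef, hrφ', hFφ] at this
    linarith
  have hinv := re_eq_abs_imp hre
  have habsinv : Complex.abs γ⁻¹ = r⁻¹ := by rw [map_inv₀]
  rw [habsinv] at hinv
  have hγ : γ = ((r : ℝ) : ℂ) := by
    have hr0 : (r:ℝ) ≠ 0 := ne_of_gt (by linarith)
    have := congrArg (·⁻¹) hinv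
    simpa using this
  rw [hγ, hrφ']

lemma deriv_lower {k : ℕ} (hk : 100 ≤ k) {α : ℂ} (h : (fibPoly k).IsRoot α)
    (hα1 : Complex.abs α < 1) :
    ((k:ℝ) - 1) / 6 ≤ Complex.abs (eval α (derivative (fibPoly k))) := by
  have hkd := key_deriv (by omega) h
  set a := Complex.abs α with hadef
  set D := Complex.abs (eval α (derivative (fibPoly k))) with hD
  have ha0 : 0 ≤ a := Complex.abs.nonneg α
  have key_abs : Complex.abs (α - 1) * D
      = a ^ (k-1) * Complex.abs (((k:ℂ)+1) * α - 2 * k) := by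
    have := congrArg Complex.abs hkd
    rw [map_mul, map_mul, map_pow] at this
    exact this
  -- |α| ^ (k-1) ≥ 1/3
  have hkeya := congrArg Complex.abs (root_key h)
  rw [map_mul, map_pow] at hkeya
  simp only [map_one] at hkeya
  have hsplit : a ^ k = a ^ (k-1) * a := by
    rw [← pow_succ]; congr 1; omega
  have h2α : Complex.abs (2 - α) ≤ 3 := by
    calc Complex.abs (2 - α) ≤ Complex.abs 2 + Complex.abs α := by
          simpa [sub_eq_add_neg] using Complex.abs.add_le 2 (-α)
      _ ≤ 3 := by
          have : Complex.abs (2:ℂ) = 2 := by norm_num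
          rw [this]; linarith
  have hap : (0:ℝ) ≤ a ^ (k-1) := by positivity
  have ha3 : (1:ℝ)/3 ≤ a ^ (k-1) := by
    rw [hsplit] at hkeya
    have ht0 : (0:ℝ) ≤ Complex.abs (2 - α) := Complex.abs.nonneg _
    have hat : a * Complex.abs (2 - α) ≤ 3 := by nlinarith
    have h3p : 1 ≤ 3 * a ^ (k-1) := by
      nlinarith [mul_le_mul_of_nonneg_left hat hap]
    linarith
  -- |(k+1)α - 2k| ≥ k - 1
  have hL : (k:ℝ) - 1 ≤ Complex.abs (((k:ℂ)+1) * α - 2 * k) := by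
    have h1 : Complex.abs ((2:ℂ) * k) - Complex.abs (((k:ℂ)+1) * α)
        ≤ Complex.abs ((2:ℂ) * k - ((k:ℂ)+1) * α) := by
      simpa [Complex.norm_eq_abs] using norm_sub_norm_le ((2:ℂ) * k) (((k:ℂ)+1) * α)
    rw [map_sub_rev] at h1
    have h2k : Complex.abs ((2:ℂ) * k) = 2 * k := by
      rw [map_mul]
      simp [Complex.abs_natCast]
    have hka : Complex.abs (((k:ℂ)+1) * α) ≤ (k:ℝ) + 1 := by
      rw [map_mul]
      have : Complex.abs ((k:ℂ)+1) = (k:ℝ) + 1 := by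
        have : ((k:ℂ)+1) = (((k:ℝ)+1 : ℝ) : ℂ) := by push_cast; ring
        rw [this, Complex.abs_ofReal, abs_of_nonneg (by positivity)]
      rw [this]
      nlinarith [Complex.abs.nonneg α, (by positivity : (0:ℝ) ≤ (k:ℝ)+1)]
    rw [h2k] at h1
    have : (100:ℝ) ≤ (k:ℝ) := by exact_mod_cast hk
    linarith
  -- finish
  have he1 : Complex.abs (α - 1) ≤ 2 := by
    calc Complex.abs (α - 1) ≤ Complex.abs α + Complex.abs 1 := by
          simpa [sub_eq_add_neg] using Complex.abs.add_le α (-1)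
      _ ≤ 2 := by simp; linarith
  have hD0 : 0 ≤ D := Complex.abs.nonneg _
  have hcalc : ((k:ℝ) - 1) / 3 ≤ Complex.abs (α - 1) * D := by
    rw [key_abs]
    have hL0 : (0:ℝ) ≤ (k:ℝ) - 1 := by
      have : (100:ℝ) ≤ (k:ℝ) := by exact_mod_cast hk
      linarith
    calc ((k:ℝ) - 1) / 3 = (1/3) * ((k:ℝ) - 1) := by ring
      _ ≤ a ^ (k-1) * Complex.abs (((k:ℂ)+1) * α - 2 * k) := by
          apply mul_le_mul ha3 hL hL0 hap
  nlinarith [mul_le_mul_of_nonneg_right he1 hD0]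

lemma key_prod_bound {k : ℕ} (hk : 100 ≤ k) {α β : ℂ}
    (hα : (fibPoly k).IsRoot α) (hβ : (fibPoly k).IsRoot β) (hne : β ≠ α)
    (hα1 : Complex.abs α < 1) (hβ1 : Complex.abs β < 1) :
    ((k:ℝ) - 1) / 18 ≤ Complex.abs (α - β) *
      ∏ γ ∈ (fibPoly k).roots.toFinset.filter
          (fun γ => Complex.abs γ < 1 ∧ γ ≠ α ∧ γ ≠ β),
        Complex.abs (α - γ) := by
  obtain ⟨φ, hφ1, hφ2, hφroot⟩ := exists_phi hk
  set S := (fibPoly k).roots.toFinset.filter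
      (fun γ => Complex.abs γ < 1 ∧ γ ≠ α ∧ γ ≠ β) with hSdef
  set E := (fibPoly k).roots.toFinset.erase α with hEdef
  have hnodup := roots_nodup hk
  -- step 1 : D = ∏ over E
  have hval : E.val = (fibPoly k).roots.erase α := by
    rw [hEdef, Finset.erase_val, Multiset.toFinset_val,
      Multiset.dedup_eq_self.mpr hnodup]
  have hprodE : Complex.abs (eval α (derivative (fibPoly k)))
      = ∏ γ ∈ E, Complex.abs (α - γ) := by
    rw [deriv_eval_prod hk hα, Finset.prod_eq_multiset_prod, hval,
      map_multiset_prod, Multiset.map_map]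
    rfl
  -- step 2 : split E
  have hβE : β ∈ E := by
    rw [hEdef, Finset.mem_erase, Multiset.mem_toFinset]
    exact ⟨hne, (mem_roots (fib_ne_zero hk)).mpr hβ⟩
  have hsplit1 : ∏ γ ∈ E, Complex.abs (α - γ)
      = (∏ γ ∈ E.filter (fun γ => Complex.abs γ < 1), Complex.abs (α - γ))
        * ∏ γ ∈ E.filter (fun γ => ¬ Complex.abs γ < 1), Complex.abs (α - γ) :=
    (Finset.prod_filter_mul_prod_filter_not E _ _).symm
  have hβE₁ : β ∈ E.filter (fun γ => Complex.abs γ < 1) :=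
    Finset.mem_filter.mpr ⟨hβE, hβ1⟩
  have hsplit2 : ∏ γ ∈ E.filter (fun γ => Complex.abs γ < 1), Complex.abs (α - γ)
      = Complex.abs (α - β) *
        ∏ γ ∈ (E.filter (fun γ => Complex.abs γ < 1)).erase β, Complex.abs (α - γ) :=
    (Finset.mul_prod_erase _ _ hβE₁).symm
  have hSeq : (E.filter (fun γ => Complex.abs γ < 1)).erase β = S := by
    ext γ
    simp only [hSdef, hEdef, Finset.mem_erase, Finset.mem_filter]
    tauto
  -- step 3 : T
  set T := E.filter (fun γ => ¬ Complex.abs γ < 1) with hTdef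
  have hTsub : T ⊆ {((φ : ℝ) : ℂ)} := by
    intro γ hγ
    rw [hTdef, Finset.mem_filter, hEdef, Finset.mem_erase, Multiset.mem_toFinset] at hγ
    obtain ⟨⟨hγα, hγroot⟩, hγabs⟩ := hγ
    have hroot : (fibPoly k).IsRoot γ := (mem_roots (fib_ne_zero hk)).mp hγroot
    have h1 : 1 < Complex.abs γ :=
      lt_of_le_of_ne (not_lt.mp hγabs) (Ne.symm (root_abs_ne_one hk hroot))
    rw [Finset.mem_singleton]
    exact root_abs_gt_one_eq_phi hk hφ1 hφ2 hφroot hroot h1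
  have hT3 : ∏ γ ∈ T, Complex.abs (α - γ) ≤ 3 := by
    rcases Finset.subset_singleton_iff.mp hTsub with h' | h'
    · rw [h', Finset.prod_empty]; norm_num
    · rw [h', Finset.prod_singleton]
      calc Complex.abs (α - ((φ:ℝ):ℂ)) ≤ Complex.abs α + Complex.abs ((φ:ℝ):ℂ) := by
            simpa [sub_eq_add_neg] using Complex.abs.add_le α (-((φ:ℝ):ℂ))
        _ ≤ 3 := by
            rw [Complex.abs_ofReal, abs_of_nonneg (by linarith)]
            linarith
  -- combine
  have hS0 : (0:ℝ) ≤ Complex.abs (α - β) * ∏ γ ∈ S, Complex.abs (α - γ) := by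
    apply mul_nonneg (Complex.abs.nonneg _)
    exact Finset.prod_nonneg (fun γ _ => Complex.abs.nonneg _)
  have hD := deriv_lower hk hα hα1
  rw [hprodE, hsplit1, hsplit2, hSeq] at hD
  have hfinal : Complex.abs (α - β) * (∏ γ ∈ S, Complex.abs (α - γ)) * 3
      ≥ ((k:ℝ) - 1) / 6 := by
    calc ((k:ℝ)-1)/6 ≤ Complex.abs (α - β) * (∏ γ ∈ S, Complex.abs (α - γ))
          * ∏ γ ∈ T, Complex.abs (α - γ) := by rw [mul_assoc] at hD ⊢; exact hD
      _ ≤ _ := by exact mul_le_mul_of_nonneg_left hT3 hS0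
  linarith

/-- Let `k ≥ 100` and let `α, β` be two distinct roots of `f_k` with `|α| < 1` and
`|β| < 1`. Then `k²/(13000·e³) < |α − β|² · ∏ |α − γ|·|β − γ|`, the product being over
all roots `γ` of `f_k` with `|γ| < 1` and `γ ∉ {α, β}`. -/
theorem fibPoly_separation_product_bound (k : ℕ) (hk : 100 ≤ k) (α β : ℂ)
    (hα : (fibPoly k).IsRoot α) (hβ : (fibPoly k).IsRoot β) (hne : α ≠ β)
    (hα1 : ‖α‖ < 1) (hβ1 : ‖β‖ < 1) :
    (k : ℝ) ^ 2 / (13000 * Real.exp 1 ^ 3) <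
      ‖α - β‖ ^ 2 *
        ∏ γ ∈ (fibPoly k).roots.toFinset.filter
            (fun γ => ‖γ‖ < 1 ∧ γ ≠ α ∧ γ ≠ β),
          ‖α - γ‖ * ‖β - γ‖ := by
  change (k : ℝ) ^ 2 / (13000 * Real.exp 1 ^ 3) <
      Complex.abs (α - β) ^ 2 *
        ∏ γ ∈ (fibPoly k).roots.toFinset.filter
            (fun γ => Complex.abs γ < 1 ∧ γ ≠ α ∧ γ ≠ β),
          Complex.abs (α - γ) * Complex.abs (β - γ)
  set S := (fibPoly k).roots.toFinset.filter
      (fun γ => Complex.abs γ < 1 ∧ γ ≠ α ∧ γ ≠ β) with hSdef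
  have h1 := key_prod_bound hk hα hβ (Ne.symm hne) hα1 hβ1
  have h2 := key_prod_bound hk hβ hα hne hβ1 hα1
  have hS' : (fibPoly k).roots.toFinset.filter
      (fun γ => Complex.abs γ < 1 ∧ γ ≠ β ∧ γ ≠ α) = S := by
    ext γ
    simp only [hSdef, Finset.mem_filter]
    tauto
  rw [hS'] at h2
  rw [map_sub_rev] at h2
  have hsplit : Complex.abs (α - β) ^ 2 *
      ∏ γ ∈ S, Complex.abs (α - γ) * Complex.abs (β - γ)
      = (Complex.abs (α - β) * ∏ γ ∈ S, Complex.abs (α - γ))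
        * (Complex.abs (α - β) * ∏ γ ∈ S, Complex.abs (β - γ)) := by
    rw [Finset.prod_mul_distrib]
    ring
  rw [hsplit]
  have hkR : (100:ℝ) ≤ (k:ℝ) := by exact_mod_cast hk
  have hpos : (0:ℝ) ≤ ((k:ℝ) - 1) / 18 := by linarith
  have hmul : (((k:ℝ) - 1) / 18) ^ 2
      ≤ (Complex.abs (α - β) * ∏ γ ∈ S, Complex.abs (α - γ))
        * (Complex.abs (α - β) * ∏ γ ∈ S, Complex.abs (β - γ)) := by
    calc (((k:ℝ) - 1) / 18) ^ 2 = (((k:ℝ)-1)/18) * (((k:ℝ)-1)/18) := sq _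
      _ ≤ _ := mul_le_mul h1 h2 hpos (le_trans hpos h1)
  refine lt_of_lt_of_le ?_ hmul
  -- numeric : k^2/(13000 e^3) < ((k-1)/18)^2
  have he : (2:ℝ) < Real.exp 1 := by
    have := Real.exp_one_gt_d9
    linarith
  have he3 : (8:ℝ) < Real.exp 1 ^ 3 := by
    calc (8:ℝ) = 2 ^ 3 := by norm_num
      _ < Real.exp 1 ^ 3 := pow_lt_pow_left₀ he (by norm_num) (by norm_num)
  have hd : (0:ℝ) < 13000 * Real.exp 1 ^ 3 := by nlinarith
  rw [div_lt_iff₀ hd]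
  nlinarith [sq_nonneg ((k:ℝ) - 1), sq_nonneg (k:ℝ), mul_le_mul hkR hkR (by norm_num) (by linarith)]
end

section
/- For every integer k ≥ 100, the absolute value of the discriminant of h_k(X) = X^(k+1) − 2X + 1 satisfies |disc(h_k)| = 2^(k+1) · k^k − (k+1)^(k+1) > 2^k · k^k. -/
open Polynomial

/-- The absolute value of the discriminant of a polynomial over `ℂ`.
For a monic polynomial `p` of degree `n` with roots `r_1, …, r_n` (with multiplicity)
in `ℂ`, one has `|disc p| = ∏ i, |p'(r_i)|`, which we take as the definition. -/
noncomputable def absDisc (p : Polynomial ℂ) : ℝ :=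
  (p.roots.map fun r => ‖p.derivative.eval r‖).prod

private lemma aux_nat (k : ℕ) (hk : 100 ≤ k) : 3 * (k + 1) < 2 ^ k := by
  induction k, hk using Nat.le_induction with
  | base => norm_num
  | succ n hn ih =>
    have h2 : 2 * (3 * (n + 1)) < 2 * 2 ^ n := by omega
    calc 3 * (n + 1 + 1) ≤ 2 * (3 * (n + 1)) := by omega
      _ < 2 * 2 ^ n := h2
      _ = 2 ^ (n + 1) := by ring

private lemma key_ineq (k : ℕ) (hk : 100 ≤ k) :
    ((k : ℝ) + 1) ^ (k + 1) < 2 ^ k * (k : ℝ) ^ k := by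
  have hkp : 0 < k := by omega
  have hk0 : (0:ℝ) < (k:ℝ) := by exact_mod_cast hkp
  have h1 : (1 + 1/(k:ℝ)) ^ k ≤ Real.exp 1 := by
    have := Real.add_one_le_exp (1/(k:ℝ))
    calc (1 + 1/(k:ℝ)) ^ k ≤ (Real.exp (1/(k:ℝ))) ^ k := by
          apply pow_le_pow_left₀ (by positivity) (by linarith)
      _ = Real.exp (k * (1/(k:ℝ))) := by rw [← Real.exp_nat_mul]
      _ = Real.exp 1 := by rw [mul_one_div, div_self (ne_of_gt hk0)]
  have h2 : ((k:ℝ) + 1) ^ k ≤ Real.exp 1 * (k:ℝ) ^ k := by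
    have hsplit : ((k:ℝ) + 1) = (k:ℝ) * (1 + 1/(k:ℝ)) := by field_simp
    rw [hsplit, mul_pow]
    calc (k:ℝ)^k * (1 + 1/(k:ℝ))^k ≤ (k:ℝ)^k * Real.exp 1 := by
          apply mul_le_mul_of_nonneg_left h1 (by positivity)
      _ = Real.exp 1 * (k:ℝ)^k := by ring
  have h3 : (3 : ℝ) * ((k:ℝ) + 1) < 2 ^ k := by
    have hn := aux_nat k hk
    have hcast : ((3 * (k+1) : ℕ) : ℝ) < ((2^k : ℕ) : ℝ) := by exact_mod_cast hn
    push_cast at hcast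
    linarith
  have hexp : Real.exp 1 < 3 := by
    have := Real.exp_one_lt_d9; norm_num at this ⊢; linarith
  calc ((k:ℝ) + 1) ^ (k + 1) = ((k:ℝ)+1) * ((k:ℝ)+1)^k := by ring
    _ ≤ ((k:ℝ)+1) * (Real.exp 1 * (k:ℝ)^k) := by
        apply mul_le_mul_of_nonneg_left h2 (by positivity)
    _ < ((k:ℝ)+1) * (3 * (k:ℝ)^k) := by
        apply mul_lt_mul_of_pos_left _ (by positivity)
        apply mul_lt_mul_of_pos_right hexp (by positivity)
    _ = (3 * ((k:ℝ)+1)) * (k:ℝ)^k := by ring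
    _ < 2 ^ k * (k:ℝ)^k := by
        apply mul_lt_mul_of_pos_right h3 (by positivity)

private lemma absDisc_val (k : ℕ) (hk : 100 ≤ k) :
    absDisc (X ^ (k + 1) - 2 * X + 1) =
      ‖((k:ℂ)+1)^(k+1) - 2^(k+1) * (k:ℂ)^k‖ := by
  have hkc : (k:ℂ) ≠ 0 := Nat.cast_ne_zero.mpr (by omega)
  have hkne : k ≠ 0 := by omega
  set p : ℂ[X] := X ^ (k+1) - 2 * X + 1 with hp
  have hmonic : p.Monic := by
    rw [hp]; monicity!
  have hdeg : p.natDegree = k + 1 := by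
    rw [hp]; compute_degree!
    all_goals simp [hkne]
    all_goals decide
  have hsplits : Splits p := IsAlgClosed.splits p
  have hcard : Multiset.card p.roots = k + 1 := by
    rw [splits_iff_card_roots.mp hsplits, hdeg]
  have hprodform : p = (Multiset.map (fun a => X - C a) p.roots).prod :=
    hsplits.eq_prod_roots_of_monic hmonic
  have heval : ∀ c : ℂ, p.eval c = (p.roots.map fun a => c - a).prod := by
    intro c
    conv_lhs => rw [hprodform]
    rw [eval_multiset_prod, Multiset.map_map]
    simp
  have hevaldef : ∀ c : ℂ, p.eval c = c ^ (k+1) - 2*c + 1 := by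
    intro c; rw [hp]; simp
  have hsq : ((-1:ℂ))^(k+1) * (-1)^(k+1) = 1 := by
    rw [← pow_add]; exact Even.neg_one_pow ⟨k+1, by ring⟩
  have hprod_roots : p.roots.prod = (-1) ^ (k+1) := by
    have h0 : p.eval 0 = (p.roots.map fun a => (0:ℂ) - a).prod := heval 0
    rw [hevaldef 0] at h0
    simp only [zero_sub] at h0
    rw [show (fun a : ℂ => -a) = Neg.neg from rfl, Multiset.prod_map_neg, hcard] at h0
    norm_num at h0
    calc p.roots.prod = ((-1:ℂ)^(k+1)*(-1)^(k+1)) * p.roots.prod := by rw [hsq, one_mul]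
      _ = (-1)^(k+1) * ((-1)^(k+1) * p.roots.prod) := by ring
      _ = (-1)^(k+1) := by rw [← h0, mul_one]
  have hderiv : ∀ r : ℂ, p.derivative.eval r = ((k:ℂ)+1) * r^k - 2 := by
    intro r
    rw [hp]
    simp [derivative_X_pow]
  have hroot_id : ∀ r ∈ p.roots, p.derivative.eval r * r = 2*(k:ℂ)*r - ((k:ℂ)+1) := by
    intro r hr
    have h0 : r ^ (k+1) - 2*r + 1 = 0 := by
      have := isRoot_of_mem_roots hr
      rw [IsRoot, hevaldef] at this; exact this
    rw [hderiv r]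
    linear_combination ((k:ℂ)+1) * h0
  set c : ℂ := ((k:ℂ)+1)/(2*(k:ℂ)) with hc
  have hterm : ∀ r ∈ p.roots, 2*(k:ℂ)*r - ((k:ℂ)+1) = (-(2*(k:ℂ))) * (c - r) := by
    intro r hr
    rw [hc]
    field_simp
    ring
  set A : ℂ := (p.roots.map fun r => p.derivative.eval r).prod with hA
  have hA1 : A * p.roots.prod = (p.roots.map fun r => 2*(k:ℂ)*r - ((k:ℂ)+1)).prod := by
    rw [hA]
    rw [show p.roots.prod = (Multiset.map (fun r : ℂ => r) p.roots).prod by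
      rw [Multiset.map_id']]
    rw [← Multiset.prod_map_mul]
    exact congrArg Multiset.prod (Multiset.map_congr rfl hroot_id)
  have hB : (p.roots.map fun r => 2*(k:ℂ)*r - ((k:ℂ)+1)).prod
      = (-(2*(k:ℂ)))^(k+1) * p.eval c := by
    rw [Multiset.map_congr rfl hterm, Multiset.prod_map_mul, Multiset.map_const',
      Multiset.prod_replicate, hcard, heval c]
  have hAval : A = (2*(k:ℂ))^(k+1) * p.eval c := by
    calc A = A * (p.roots.prod * (-1)^(k+1)) := by
          rw [hprod_roots, hsq, mul_one]
      _ = (A * p.roots.prod) * (-1)^(k+1) := by ring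
      _ = ((-(2*(k:ℂ)))^(k+1) * p.eval c) * (-1)^(k+1) := by rw [hA1, hB]
      _ = ((-(2*(k:ℂ))) * (-1))^(k+1) * p.eval c := by rw [mul_pow]; ring
      _ = (2*(k:ℂ))^(k+1) * p.eval c := by ring_nf
  have hAfinal : A = ((k:ℂ)+1)^(k+1) - 2^(k+1) * (k:ℂ)^k := by
    rw [hAval, hevaldef c, hc]
    simp only [div_pow, mul_pow]
    field_simp
    ring
  show (p.roots.map fun r => ‖p.derivative.eval r‖).prod = _
  rw [show (fun r => ‖p.derivative.eval r‖)
      = (normHom : ℂ →*₀ ℝ) ∘ (fun r => p.derivative.eval r) from rfl,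
    ← Multiset.map_map, ← map_multiset_prod (normHom : ℂ →*₀ ℝ), ← hA, hAfinal]
  rfl

/-- For every integer `k ≥ 100`, the absolute value of the discriminant of
`h_k(X) = X^(k+1) − 2X + 1` satisfies
`|disc(h_k)| = 2^(k+1)·k^k − (k+1)^(k+1) > 2^k·k^k`. -/
theorem absDisc_hPoly (k : ℕ) (hk : 100 ≤ k) :
    absDisc (X ^ (k + 1) - 2 * X + 1) =
        2 ^ (k + 1) * (k : ℝ) ^ k - ((k : ℝ) + 1) ^ (k + 1) ∧
      2 ^ (k + 1) * (k : ℝ) ^ k - ((k : ℝ) + 1) ^ (k + 1) > 2 ^ k * (k : ℝ) ^ k := by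
  have hineq := key_ineq k hk
  have hpow : (2:ℝ)^(k+1) * (k:ℝ)^k = 2 * (2^k * (k:ℝ)^k) := by ring
  have hpos : (0:ℝ) ≤ 2^k * (k:ℝ)^k := by positivity
  constructor
  · rw [absDisc_val k hk]
    have hcast : (((k:ℂ)+1)^(k+1) - 2^(k+1) * (k:ℂ)^k)
        = (((((k:ℝ)+1)^(k+1) - 2^(k+1) * (k:ℝ)^k : ℝ)) : ℂ) := by
      push_cast; ring
    rw [hcast, Complex.norm_real, Real.norm_eq_abs, abs_of_nonpos (by linarith)]
    ring
  · linarith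
end
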